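/- Let R and S be bornological V-algebras. Then the linear growth bornology of the bornological tensor product R ⊗ S equals the tensor product of the linear growth bornologies of R and S, i.e. (R ⊗ S)^{lg-bornology} = R^{lg-bornology} ⊗ S^{lg-bornology}; consequently the linear growth completion of R ⊗ S is naturally isomorphic to the complete bornological tensor product of the linear growth completions of R and of S. -/

import Mathlib

open Pointwise

universe u v w

/-- A (convex) bornology on a `V`-module `X`: a family of *bounded* subsets containing all
finite subsets, closed under subsets and finite unions, and such that the `V`-submodule
generated by a bounded subset is again bounded. -/
structure ModBornology (V : Type u) [CommRing V] (X : Type v) [AddCommGroup X] [Module V X] :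
    Type v where
  IsBounded : Set X → Prop
  isBounded_of_finite : ∀ ⦃s : Set X⦄, s.Finite → IsBounded s
  isBounded_subset : ∀ ⦃s t : Set X⦄, IsBounded t → s ⊆ t → IsBounded s
  isBounded_union : ∀ ⦃s t : Set X⦄, IsBounded s → IsBounded t → IsBounded (s ∪ t)
  isBounded_span : ∀ ⦃s : Set X⦄, IsBounded s → IsBounded (Submodule.span V s : Set X)

namespace Born

variable {V : Type u} [CommRing V] {X : Type v} [AddCommGroup X] [Module V X]
  {Y : Type w} [AddCommGroup Y] [Module V Y]

/-- `δ n → 0` in the `π`-adic topology on `V`. -/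
def TendstoPiAdic (π : V) (δ : ℕ → V) : Prop :=
  ∀ m : ℕ, ∃ N : ℕ, ∀ n ≥ N, π ^ m ∣ δ n

/-- The sequence `x` `S`-converges to `l`. -/
def SConvTo (π : V) (S : Set X) (x : ℕ → X) (l : X) : Prop :=
  ∃ δ : ℕ → V, TendstoPiAdic π δ ∧ ∀ n : ℕ, x n - l ∈ δ n • S

/-- The sequence `x` converges (bornologically) to `l`. -/
def ConvTo (π : V) (𝓑 : ModBornology V X) (x : ℕ → X) (l : X) : Prop :=
  ∃ S : Set X, 𝓑.IsBounded S ∧ SConvTo π S x l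

/-- The sequence `x` is `S`-Cauchy. -/
def SCauchy (π : V) (S : Set X) (x : ℕ → X) : Prop :=
  ∃ δ : ℕ → V, TendstoPiAdic π δ ∧ ∀ l n m : ℕ, l ≤ n → l ≤ m → x n - x m ∈ δ l • S

/-- A bornological `V`-module is separated if limits of convergent sequences are unique. -/
def BornSeparated (π : V) (𝓑 : ModBornology V X) : Prop :=
  ∀ (x : ℕ → X) (l₁ l₂ : X), ConvTo π 𝓑 x l₁ → ConvTo π 𝓑 x l₂ → l₁ = l₂

/-- A bornological `V`-module is complete if it is separated and every `S`-Cauchy sequence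
`S'`-converges for some bounded `S'` depending only on `S`. -/
def BornComplete (π : V) (𝓑 : ModBornology V X) : Prop :=
  BornSeparated π 𝓑 ∧ ∀ S : Set X, 𝓑.IsBounded S → ∃ S' : Set X, 𝓑.IsBounded S' ∧
    ∀ x : ℕ → X, SCauchy π S x → ∃ l : X, SConvTo π S' x l

/-- A linear map is bounded if it maps bounded sets to bounded sets. -/
def BoundedMap (𝓑X : ModBornology V X) (𝓑Y : ModBornology V Y) (f : X →ₗ[V] Y) : Prop :=
  ∀ ⦃s : Set X⦄, 𝓑X.IsBounded s → 𝓑Y.IsBounded (f '' s)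

end Born

namespace Born

variable {V : Type u} [CommRing V] {X : Type v} [AddCommGroup X] [Module V X]
  {C : Type w} [AddCommGroup C] [Module V C]

/-- `(C, 𝓑C, ι)` is *the* (bornological) completion of `(X, 𝓑X)`: `C` is complete, `ι` is
bounded, and every bounded linear map from `X` to a complete bornological `V`-module
factors uniquely through `ι`. -/
def IsCompletion (π : V) (𝓑X : ModBornology V X) (𝓑C : ModBornology V C)
    (ι : X →ₗ[V] C) : Prop :=
  BornComplete π 𝓑C ∧ BoundedMap 𝓑X 𝓑C ι ∧
    ∀ (Y : Type (max u v w)) (_ : AddCommGroup Y) (_ : Module V Y) (𝓑Y : ModBornology V Y),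
      BornComplete π 𝓑Y → ∀ f : X →ₗ[V] Y, BoundedMap 𝓑X 𝓑Y f →
        ∃! g : C →ₗ[V] Y, BoundedMap 𝓑C 𝓑Y g ∧ g.comp ι = f

end Born

namespace Born

section SpectralRadius

variable {V : Type u} [CommRing V]

/-- `⌈log_ε r⌉`, the exponent appearing in the operation `r ⋆ M = π ^ ⌈log_ε r⌉ • M`. -/
noncomputable def cexp (ε r : ℝ) : ℤ := ⌈Real.log r / Real.log ε⌉

section Valg

variable {A : Type v} [Ring A] [Algebra V A]

/-- An algebra bornology: a module bornology for which multiplication is bounded. -/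
def IsAlgBorn (𝓑 : ModBornology V A) : Prop :=
  ∀ ⦃s t : Set A⦄, 𝓑.IsBounded s → 𝓑.IsBounded t → 𝓑.IsBounded (s * t)

/-- `r ⋆ M = π ^ ⌈log_ε r⌉ • M` for `r ≤ 1` in a `V`-algebra (nonnegative exponent). -/
noncomputable def starV (π : V) (ε r : ℝ) (M : Submodule V A) : Submodule V A :=
  π ^ ((cexp ε r).toNat) • M

/-- The submodule of finite sums `Σ_{n ≥ 0} r^{-n} ⋆ M ^ n`. -/
noncomputable def geomSumV (π : V) (ε r : ℝ) (M : Submodule V A) : Submodule V A :=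
  ⨆ n : ℕ, starV π ε (r ^ (-(n : ℤ))) (M ^ n)

/-- `ρ(M) ≤ 1` in a bornological `V`-algebra: the submodule `Σ_{n} r^{-n} ⋆ M^n` is
bounded for every `r > 1`. -/
noncomputable def SpecLeOne (π : V) (ε : ℝ) (𝓑 : ModBornology V A) (M : Submodule V A) : Prop :=
  ∀ r : ℝ, 1 < r → 𝓑.IsBounded (geomSumV π ε r M : Set A)

end Valg

section Kalg

variable (K : Type u) [Field K] [Algebra V K]
variable {A : Type v} [Ring A] [Algebra K A] [Algebra V A] [IsScalarTower V K A]

/-- Scalar multiplication by `c : K` as a `V`-linear map on a `K`-algebra. -/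
noncomputable def kSmul (c : K) : A →ₗ[V] A :=
  LinearMap.restrictScalars V (LinearMap.lsmul K A c)

/-- `r ⋆ M = π ^ ⌈log_ε r⌉ • M` in a `K`-algebra (integer exponent). -/
noncomputable def starK (π : V) (ε r : ℝ) (M : Submodule V A) : Submodule V A :=
  M.map (kSmul K ((algebraMap V K π) ^ (cexp ε r)))

/-- The submodule of finite sums `Σ_{n ≥ 0} r^{-n} ⋆ M ^ n` in a `K`-algebra. -/
noncomputable def geomSumK (π : V) (ε r : ℝ) (M : Submodule V A) : Submodule V A :=
  ⨆ n : ℕ, starK K π ε (r ^ (-(n : ℤ))) (M ^ n)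

/-- The spectral radius of a bounded `V`-submodule `M` of a bornological `K`-algebra:
the infimum (in `ℝ≥0∞`) of all `r > 0` such that `Σ_n r^{-n} ⋆ M^n` is bounded. -/
noncomputable def specRad (π : V) (ε : ℝ) (𝓑 : ModBornology V A) (M : Submodule V A) : ENNReal :=
  sInf {ρ : ENNReal | ∃ r : ℝ, 0 < r ∧ ρ = ENNReal.ofReal r ∧
    𝓑.IsBounded (geomSumK K π ε r M : Set A)}

/-- A bornological `K`-algebra structure: multiplication is bounded and multiplication
by `π⁻¹` (the inverse of multiplication by `π`) is bounded. -/
def IsKAlgBorn (π : V) (𝓑 : ModBornology V A) : Prop :=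
  IsAlgBorn 𝓑 ∧ ∀ ⦃s : Set A⦄, 𝓑.IsBounded s → 𝓑.IsBounded (kSmul (V := V) K ((algebraMap V K π)⁻¹) '' s)

end Kalg

end SpectralRadius

end Born

namespace Born

variable {V : Type u} [CommRing V] {A : Type v} [Ring A] [Algebra V A]

/-- `𝓑 ≤ 𝓒` for bornologies: every `𝓑`-bounded set is `𝓒`-bounded. -/
def BornLE (𝓑 𝓒 : ModBornology V A) : Prop :=
  ∀ ⦃s : Set A⦄, 𝓑.IsBounded s → 𝓒.IsBounded s

/-- `𝓛` is the linear growth bornology of the bornological `V`-algebra `(A, 𝓑)`: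
the smallest algebra bornology containing `𝓑` all of whose bounded `V`-submodules have
spectral radius at most `1`. -/
noncomputable def IsLinGrowthBorn (π : V) (ε : ℝ) (𝓑 𝓛 : ModBornology V A) : Prop :=
  IsAlgBorn 𝓛 ∧ BornLE 𝓑 𝓛 ∧
  (∀ M : Submodule V A, 𝓛.IsBounded (M : Set A) → SpecLeOne π ε 𝓛 M) ∧
  ∀ 𝓒 : ModBornology V A, IsAlgBorn 𝓒 → BornLE 𝓑 𝓒 →
    (∀ M : Submodule V A, 𝓒.IsBounded (M : Set A) → SpecLeOne π ε 𝓒 M) → BornLE 𝓛 𝓒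

end Born

open Born
open scoped TensorProduct

namespace Born

variable {V : Type u} [CommRing V]

/-- `𝓣` is the (bornological) tensor product bornology on `X ⊗[V] Y`: a subset is bounded
iff it is contained in the image of `M ⊗ N` for bounded `V`-submodules `M ⊆ X`, `N ⊆ Y`. -/
def IsTensorBorn {X Y : Type u} [AddCommGroup X] [Module V X] [AddCommGroup Y] [Module V Y]
    (𝓑X : ModBornology V X) (𝓑Y : ModBornology V Y)
    (𝓣 : ModBornology V (X ⊗[V] Y)) : Prop :=
  ∀ U : Set (X ⊗[V] Y), 𝓣.IsBounded U ↔ ∃ (M : Submodule V X) (N : Submodule V Y),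
    𝓑X.IsBounded (M : Set X) ∧ 𝓑Y.IsBounded (N : Set Y) ∧
    U ⊆ (Submodule.span V (Set.image2 (· ⊗ₜ[V] ·) (M : Set X) (N : Set Y)) : Set (X ⊗[V] Y))

/-- A bilinear map is bounded if it maps pairs of bounded sets to bounded sets. -/
def BoundedBilin {X Y Z : Type u} [AddCommGroup X] [Module V X] [AddCommGroup Y] [Module V Y]
    [AddCommGroup Z] [Module V Z]
    (𝓑X : ModBornology V X) (𝓑Y : ModBornology V Y) (𝓑Z : ModBornology V Z)
    (β : X →ₗ[V] Y →ₗ[V] Z) : Prop :=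
  ∀ ⦃s : Set X⦄ ⦃t : Set Y⦄, 𝓑X.IsBounded s → 𝓑Y.IsBounded t →
    𝓑Z.IsBounded (Set.image2 (fun x y => β x y) s t)

end Born

namespace Born

variable {V : Type u} [CommRing V]

section Basic

variable {X : Type v} [AddCommGroup X] [Module V X] {Y : Type w} [AddCommGroup Y] [Module V Y]
  {𝓑X : ModBornology V X} {𝓑Y : ModBornology V Y}

theorem bdd_of_subset_span {s B : Set X} (hB : 𝓑X.IsBounded B)
    (h : s ⊆ (Submodule.span V B : Set X)) : 𝓑X.IsBounded s :=
  𝓑X.isBounded_subset (𝓑X.isBounded_span hB) h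

theorem BoundedMap.comp' {Z : Type*} [AddCommGroup Z] [Module V Z] {𝓑Z : ModBornology V Z}
    {f : X →ₗ[V] Y} {g : Y →ₗ[V] Z} (hg : BoundedMap 𝓑Y 𝓑Z g) (hf : BoundedMap 𝓑X 𝓑Y f) :
    BoundedMap 𝓑X 𝓑Z (g.comp f) := fun s hs => by
  have := hg (hf hs)
  rwa [← Set.image_comp] at this

theorem BoundedMap.add' {f g : X →ₗ[V] Y} (hf : BoundedMap 𝓑X 𝓑Y f)
    (hg : BoundedMap 𝓑X 𝓑Y g) : BoundedMap 𝓑X 𝓑Y (f + g) := fun s hs => by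
  apply bdd_of_subset_span (𝓑Y.isBounded_union (hf hs) (hg hs))
  rintro - ⟨x, hx, rfl⟩
  exact Submodule.add_mem _
    (Submodule.subset_span (Set.mem_union_left _ ⟨x, hx, rfl⟩))
    (Submodule.subset_span (Set.mem_union_right _ ⟨x, hx, rfl⟩))

theorem BoundedMap.smul' {f : X →ₗ[V] Y} (c : V) (hf : BoundedMap 𝓑X 𝓑Y f) :
    BoundedMap 𝓑X 𝓑Y (c • f) := fun s hs => by
  apply bdd_of_subset_span (hf hs)
  rintro - ⟨x, hx, rfl⟩
  exact Submodule.smul_mem _ c (Submodule.subset_span ⟨x, hx, rfl⟩)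

theorem BoundedMap.neg' {f : X →ₗ[V] Y} (hf : BoundedMap 𝓑X 𝓑Y f) :
    BoundedMap 𝓑X 𝓑Y (-f) := by
  have := BoundedMap.smul' (𝓑X := 𝓑X) (𝓑Y := 𝓑Y) (-1 : V) hf
  rwa [neg_one_smul] at this

end Basic

section Omega

/-- Uniformization: from a `π`-adically null sequence `δ` extract an exponent
sequence `ω` with `π ^ ω n → 0` and `π ^ ω n ∣ δ n`. -/
theorem exists_omega (π : V) {δ : ℕ → V} (hδ : TendstoPiAdic π δ) :
    ∃ ω : ℕ → ℕ, TendstoPiAdic π (fun n => π ^ ω n) ∧ ∀ n, π ^ ω n ∣ δ n := by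
  classical
  refine ⟨fun n => Nat.findGreatest (fun m => Classical.choose (hδ m) ≤ n) n, ?_, ?_⟩
  · intro m
    refine ⟨max m (Classical.choose (hδ m)), fun n hn => ?_⟩
    have h1 : m ≤ Nat.findGreatest (fun m => Classical.choose (hδ m) ≤ n) n :=
      Nat.le_findGreatest (le_trans (le_max_left _ _) hn)
        (le_trans (le_max_right _ _) hn)
    exact pow_dvd_pow π h1
  · intro n
    rcases Nat.eq_zero_or_pos (Nat.findGreatest (fun m => Classical.choose (hδ m) ≤ n) n)
      with h0 | hpos
    · simp only [h0, pow_zero]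
      exact one_dvd _
    · obtain ⟨m, hm0, hmk, hPm⟩ := Nat.findGreatest_pos.mp hpos
      have hspec := Nat.findGreatest_spec (P := fun m => Classical.choose (hδ m) ≤ n) hmk hPm
      exact Classical.choose_spec (hδ _) n hspec

end Omega

end Born
namespace Born

section BddFn

variable {V : Type u} [CommRing V] {C : Type u} [AddCommGroup C] [Module V C]

/-- The `V`-module of functions `α → C` with bounded image. -/
def bddFn (𝓑 : ModBornology V C) (α : Type u) : Submodule V (α → C) where
  carrier := {g | ∃ B : Set C, 𝓑.IsBounded B ∧ ∀ a, g a ∈ Submodule.span V B}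
  add_mem' := by
    rintro f g ⟨Bf, hBf, hf⟩ ⟨Bg, hBg, hg⟩
    exact ⟨Bf ∪ Bg, 𝓑.isBounded_union hBf hBg, fun a => Submodule.add_mem _
      (Submodule.span_mono Set.subset_union_left (hf a))
      (Submodule.span_mono Set.subset_union_right (hg a))⟩
  zero_mem' := ⟨∅, 𝓑.isBounded_of_finite Set.finite_empty, fun a => Submodule.zero_mem _⟩
  smul_mem' := by
    rintro c f ⟨B, hB, hf⟩
    exact ⟨B, hB, fun a => Submodule.smul_mem _ _ (hf a)⟩

/-- The equiboundedness bornology on `bddFn 𝓑 α`. -/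
def bddFnBorn (𝓑 : ModBornology V C) (α : Type u) : ModBornology V (bddFn 𝓑 α) where
  IsBounded s := ∃ B : Set C, 𝓑.IsBounded B ∧ ∀ g ∈ s, ∀ a, (g : α → C) a ∈ Submodule.span V B
  isBounded_of_finite := by
    intro s hs
    refine Set.Finite.induction_on (motive := fun (s : Set (bddFn 𝓑 α)) _ => ∃ B : Set C, 𝓑.IsBounded B ∧
      ∀ g ∈ s, ∀ a, (g : α → C) a ∈ Submodule.span V B) s hs ⟨∅, 𝓑.isBounded_of_finite Set.finite_empty, by simp⟩ ?_
    rintro g t - - ⟨B, hB, hmem⟩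
    obtain ⟨Bg, hBg, hg⟩ := g.2
    refine ⟨Bg ∪ B, 𝓑.isBounded_union hBg hB, ?_⟩
    rintro f (rfl | hf) a
    · exact Submodule.span_mono Set.subset_union_left (hg a)
    · exact Submodule.span_mono Set.subset_union_right (hmem f hf a)
  isBounded_subset := by
    rintro s t ⟨B, hB, hmem⟩ hsub
    exact ⟨B, hB, fun g hg => hmem g (hsub hg)⟩
  isBounded_union := by
    rintro s t ⟨B, hB, hmem⟩ ⟨B', hB', hmem'⟩
    refine ⟨B ∪ B', 𝓑.isBounded_union hB hB', ?_⟩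
    rintro g (hg | hg) a
    · exact Submodule.span_mono Set.subset_union_left (hmem g hg a)
    · exact Submodule.span_mono Set.subset_union_right (hmem' g hg a)
  isBounded_span := by
    rintro s ⟨B, hB, hmem⟩
    refine ⟨B, hB, ?_⟩
    intro g hg
    refine Submodule.span_induction (p := fun (g : bddFn 𝓑 α) _ => ∀ a, (g : α → C) a ∈ Submodule.span V B)
      (fun f hf => hmem f hf) (fun a => by simp) ?_ ?_ hg
    · intro f₁ f₂ _ _ h1 h2 a
      have : ((f₁ + f₂ : bddFn 𝓑 α) : α → C) a = (f₁ : α → C) a + (f₂ : α → C) a := rfl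
      rw [this]; exact Submodule.add_mem _ (h1 a) (h2 a)
    · intro c f _ h a
      have : ((c • f : bddFn 𝓑 α) : α → C) a = c • (f : α → C) a := rfl
      rw [this]; exact Submodule.smul_mem _ _ (h a)

theorem bddFn_coe_sub {α : Type u} {𝓑 : ModBornology V C} (f g : bddFn 𝓑 α) (a : α) :
    ((f - g : bddFn 𝓑 α) : α → C) a = (f : α → C) a - (g : α → C) a := rfl

end BddFn

end Born
namespace Born

section BddFnComplete

variable {V : Type u} [CommRing V] {C : Type u} [AddCommGroup C] [Module V C]

theorem uniform_limit_mem (π : V) {S S' : Set C} {z : ℕ → C} {l : C} {δ : ℕ → V} {ω : ℕ → ℕ}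
    (hω : ∀ n, π ^ ω n ∣ δ n)
    (hc : ∀ k n m : ℕ, k ≤ n → k ≤ m → z n - z m ∈ δ k • S)
    (hconv : SConvTo π S' z l) (n : ℕ) :
    ∃ y ∈ Submodule.span V (S ∪ S'), z n - l = π ^ ω n • y := by
  obtain ⟨δ', hδ', hmem⟩ := hconv
  obtain ⟨N, hN⟩ := hδ' (ω n)
  obtain ⟨s, hs, hs'⟩ := Set.mem_smul_set.mp (hc n n (max n N) le_rfl (le_max_left _ _))
  obtain ⟨s', hs2, hs2'⟩ := Set.mem_smul_set.mp (hmem (max n N))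
  obtain ⟨u, hu⟩ := hω n
  obtain ⟨u', hu'⟩ := hN _ (le_max_right n N)
  refine ⟨u • s + u' • s', Submodule.add_mem _
    (Submodule.smul_mem _ _ (Submodule.subset_span (Or.inl hs)))
    (Submodule.smul_mem _ _ (Submodule.subset_span (Or.inr hs2))), ?_⟩
  have hzl : z n - l = (z n - z (max n N)) + (z (max n N) - l) := by abel
  rw [hzl, ← hs', ← hs2', hu, hu', smul_add, mul_smul, mul_smul]

variable {α : Type u} {𝓑 : ModBornology V C}

theorem bddFnBorn_complete (π : V) (hC : BornComplete π 𝓑) :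
    BornComplete π (bddFnBorn 𝓑 α) := by
  classical
  constructor
  · -- separated
    rintro x l₁ l₂ ⟨s₁, ⟨B₁, hB₁, hmem₁⟩, δ₁, hδ₁, hd₁⟩ ⟨s₂, ⟨B₂, hB₂, hmem₂⟩, δ₂, hδ₂, hd₂⟩
    apply Subtype.ext; funext a
    have conv : ∀ (B : Set C) (s : Set (bddFn 𝓑 α)) (δ : ℕ → V) (l : bddFn 𝓑 α),
        𝓑.IsBounded B → (∀ g ∈ s, ∀ b, (g : α → C) b ∈ Submodule.span V B) →
        TendstoPiAdic π δ → (∀ n, x n - l ∈ δ n • s) →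
        ConvTo π 𝓑 (fun n => (x n : α → C) a) ((l : α → C) a) := by
      intro B s δ l hB hmem hδ hd
      refine ⟨(Submodule.span V B : Set C), 𝓑.isBounded_span hB, δ, hδ, fun n => ?_⟩
      obtain ⟨g, hg, hg'⟩ := Set.mem_smul_set.mp (hd n)
      refine Set.mem_smul_set.mpr ⟨(g : α → C) a, hmem g hg a, ?_⟩
      have := congrArg (fun f : bddFn 𝓑 α => (f : α → C) a) hg'
      simpa using this
    exact hC.1 _ _ _ (conv B₁ s₁ δ₁ l₁ hB₁ hmem₁ hδ₁ hd₁) (conv B₂ s₂ δ₂ l₂ hB₂ hmem₂ hδ₂ hd₂)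
  · rintro s ⟨B, hB, hmem⟩
    obtain ⟨B', hB', hcomp⟩ := hC.2 (Submodule.span V B : Set C) (𝓑.isBounded_span hB)
    set D : Set C := (Submodule.span V B : Set C) ∪ B' with hD
    refine ⟨{g : bddFn 𝓑 α | ∀ a, (g : α → C) a ∈ Submodule.span V D}, ?_, ?_⟩
    · refine ⟨B ∪ B', 𝓑.isBounded_union hB hB', fun g hg a => ?_⟩
      refine Submodule.span_le.mpr ?_ (hg a)
      rintro c (hc | hc)
      · exact Submodule.span_mono Set.subset_union_left hc
      · exact Submodule.subset_span (Or.inr hc)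
    · rintro x ⟨δ, hδ, hcau⟩
      obtain ⟨ω, hω, hωdvd⟩ := exists_omega π hδ
      have hptmem : ∀ (a : α) (k n m : ℕ), k ≤ n → k ≤ m →
          (x n : α → C) a - (x m : α → C) a ∈ δ k • (Submodule.span V B : Set C) := by
        intro a k n m hkn hkm
        obtain ⟨g, hg, hg'⟩ := Set.mem_smul_set.mp (hcau k n m hkn hkm)
        refine Set.mem_smul_set.mpr ⟨(g : α → C) a, hmem g hg a, ?_⟩
        have := congrArg (fun f : bddFn 𝓑 α => (f : α → C) a) hg'
        simpa using this
      have hpt : ∀ a, ∃ l : C, SConvTo π B' (fun n => (x n : α → C) a) l := by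
        intro a
        exact hcomp _ ⟨δ, hδ, hptmem a⟩
      choose lim hlim using hpt
      have key : ∀ (n : ℕ) (a : α), ∃ y ∈ Submodule.span V D,
          (x n : α → C) a - lim a = π ^ ω n • y := by
        intro n a
        exact uniform_limit_mem π hωdvd (hptmem a) (hlim a) n
      -- the limit function is bounded
      obtain ⟨B₀, hB₀, hval₀⟩ := (x 0).2
      have hDbdd : 𝓑.IsBounded D :=
        𝓑.isBounded_union (𝓑.isBounded_span hB) hB'
      have hlimmem : (fun a => lim a) ∈ bddFn 𝓑 α := by
        refine ⟨B₀ ∪ D, 𝓑.isBounded_union hB₀ hDbdd, fun a => ?_⟩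
        obtain ⟨y, hy, hy'⟩ := key 0 a
        have : lim a = (x 0 : α → C) a - π ^ ω 0 • y := by
          rw [eq_sub_iff_add_eq, ← hy']; abel
        show lim a ∈ Submodule.span V (B₀ ∪ D)
        rw [this]
        exact Submodule.sub_mem _
          (Submodule.span_mono Set.subset_union_left (hval₀ a))
          (Submodule.smul_mem _ _ ((Submodule.span_le.mpr
            (fun c hc => Submodule.subset_span (Or.inr hc))) hy))
      refine ⟨⟨fun a => lim a, hlimmem⟩, fun n => π ^ ω n, hω, fun n => ?_⟩
      choose y hy hy' using key n
      have hgmem : (fun a => y a) ∈ bddFn 𝓑 α := ⟨D, hDbdd, hy⟩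
      refine Set.mem_smul_set.mpr ⟨⟨fun a => y a, hgmem⟩, hy, ?_⟩
      apply Subtype.ext; funext a
      have h1 : ((π ^ ω n • (⟨fun a => y a, hgmem⟩ : bddFn 𝓑 α) : bddFn 𝓑 α) : α → C) a
          = π ^ ω n • y a := rfl
      have h2 : ((x n - ⟨fun a => lim a, hlimmem⟩ : bddFn 𝓑 α) : α → C) a
          = (x n : α → C) a - lim a := rfl
      rw [h1, h2] at *
      exact (hy' a).symm

end BddFnComplete

end Born
namespace Born

section Part1

variable {V : Type u} [CommRing V]

section Pull

variable {A : Type v} [Ring A] [Algebra V A] {T : Type w} [Ring T] [Algebra V T]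

/-- Pullback of a bornology along a linear map. -/
def pullBorn (f : A →ₗ[V] T) (𝓒 : ModBornology V T) : ModBornology V A where
  IsBounded s := 𝓒.IsBounded (f '' s)
  isBounded_of_finite := fun s hs => 𝓒.isBounded_of_finite (hs.image f)
  isBounded_subset := fun s t ht hsub => 𝓒.isBounded_subset ht (Set.image_mono hsub)
  isBounded_union := fun s t hs ht => by
    show 𝓒.IsBounded (f '' (s ∪ t))
    rw [Set.image_union]; exact 𝓒.isBounded_union hs ht
  isBounded_span := fun s hs => by
    show 𝓒.IsBounded (f '' (Submodule.span V s : Set A))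
    have h1 : f '' (Submodule.span V s : Set A) = (Submodule.map f (Submodule.span V s) : Set T) :=
      rfl
    rw [h1, Submodule.map_span]
    exact 𝓒.isBounded_span hs

theorem pullBorn_isAlgBorn (j : A →ₐ[V] T) {𝓒 : ModBornology V T} (h𝓒 : IsAlgBorn 𝓒) :
    IsAlgBorn (pullBorn j.toLinearMap 𝓒) := by
  intro s t hs ht
  apply 𝓒.isBounded_subset (h𝓒 hs ht)
  rintro - ⟨-, ⟨a, ha, b, hb, rfl⟩, rfl⟩
  exact ⟨j a, ⟨a, ha, rfl⟩, j b, ⟨b, hb, rfl⟩, (map_mul j a b).symm⟩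

theorem pullBorn_spec (π : V) (ε : ℝ) (j : A →ₐ[V] T) {𝓒 : ModBornology V T}
    (hT : ∀ M : Submodule V T, 𝓒.IsBounded (M : Set T) → SpecLeOne π ε 𝓒 M)
    (M : Submodule V A) (hM : (pullBorn j.toLinearMap 𝓒).IsBounded (M : Set A)) :
    SpecLeOne π ε (pullBorn j.toLinearMap 𝓒) M := by
  intro r hr
  have hM' : 𝓒.IsBounded ((M.map j.toLinearMap : Submodule V T) : Set T) := hM
  have hspec := hT _ hM' r hr
  show 𝓒.IsBounded (j.toLinearMap '' (geomSumV π ε r M : Set A))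
  have hmap : (geomSumV π ε r M).map j.toLinearMap = geomSumV π ε r (M.map j.toLinearMap) := by
    unfold geomSumV starV
    rw [Submodule.map_iSup]
    congr 1
    funext n
    rw [Submodule.map_pointwise_smul, Submodule.map_pow]
  have h1 : j.toLinearMap '' (geomSumV π ε r M : Set A)
      = ((geomSumV π ε r M).map j.toLinearMap : Set T) := rfl
  rw [h1, hmap]
  exact hspec

end Pull

section Tensor

variable {R : Type u} [Ring R] [Algebra V R] {S : Type u} [Ring S] [Algebra V S]

/-- The span of the image of `M ⊗ N` in `R ⊗[V] S`. -/
def tsp (M : Submodule V R) (N : Submodule V S) : Submodule V (R ⊗[V] S) :=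
  Submodule.span V (Set.image2 (· ⊗ₜ[V] ·) (M : Set R) (N : Set S))

theorem tsp_mono {M M' : Submodule V R} {N N' : Submodule V S} (hM : M ≤ M') (hN : N ≤ N') :
    tsp M N ≤ tsp M' N' :=
  Submodule.span_mono (Set.image2_subset hM hN)

theorem tsp_mul_le (M M' : Submodule V R) (N N' : Submodule V S) :
    tsp M N * tsp M' N' ≤ tsp (M * M') (N * N') := by
  rw [tsp, tsp, Submodule.span_mul_span]
  apply Submodule.span_le.mpr
  rintro - ⟨-, ⟨m, hm, n, hn, rfl⟩, -, ⟨m', hm', n', hn', rfl⟩, rfl⟩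
  show (m ⊗ₜ[V] n) * (m' ⊗ₜ[V] n') ∈ (tsp (M * M') (N * N') : Set (R ⊗[V] S))
  rw [Algebra.TensorProduct.tmul_mul_tmul]
  exact Submodule.subset_span
    ⟨m * m', Submodule.mul_mem_mul hm hm', n * n', Submodule.mul_mem_mul hn hn', rfl⟩

theorem tsp_pow_le (M : Submodule V R) (N : Submodule V S) :
    ∀ n : ℕ, (tsp M N) ^ n ≤ tsp (M ^ n) (N ^ n) := by
  intro n
  induction n with
  | zero =>
    simp only [pow_zero]
    rw [Submodule.one_eq_span]
    apply Submodule.span_le.mpr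
    rintro - rfl
    have h1 : (1 : R ⊗[V] S) = (1 : R) ⊗ₜ[V] (1 : S) := rfl
    rw [h1]
    refine Submodule.subset_span ⟨1, ?_, 1, ?_, rfl⟩
    · show (1:R) ∈ ((1 : Submodule V R) : Set R)
      rw [Submodule.one_eq_span]; exact Submodule.subset_span rfl
    · show (1:S) ∈ ((1 : Submodule V S) : Set S)
      rw [Submodule.one_eq_span]; exact Submodule.subset_span rfl
  | succ n ih =>
    rw [pow_succ, pow_succ, pow_succ]
    exact le_trans (mul_le_mul' ih le_rfl) (tsp_mul_le _ _ _ _)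

end Tensor

section AlgBdd

variable {A : Type v} [Ring A] [Algebra V A] {𝓑 : ModBornology V A}

theorem bdd_mul_submodule (h𝓑 : IsAlgBorn 𝓑) {M N : Submodule V A}
    (hM : 𝓑.IsBounded (M : Set A)) (hN : 𝓑.IsBounded (N : Set A)) :
    𝓑.IsBounded ((M * N : Submodule V A) : Set A) := by
  rw [Submodule.mul_eq_span_mul_set]
  exact 𝓑.isBounded_span (h𝓑 hM hN)

theorem bdd_one (𝓑 : ModBornology V A) : 𝓑.IsBounded ((1 : Submodule V A) : Set A) := by
  rw [Submodule.one_eq_span]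
  exact 𝓑.isBounded_span (𝓑.isBounded_of_finite (Set.finite_singleton _))

theorem bdd_pow (h𝓑 : IsAlgBorn 𝓑) {M : Submodule V A} (hM : 𝓑.IsBounded (M : Set A)) :
    ∀ n : ℕ, 𝓑.IsBounded ((M ^ n : Submodule V A) : Set A) := by
  intro n
  induction n with
  | zero => rw [pow_zero]; exact bdd_one 𝓑
  | succ n ih => rw [pow_succ]; exact bdd_mul_submodule h𝓑 ih hM

theorem bdd_sup {M N : Submodule V A} (hM : 𝓑.IsBounded (M : Set A))
    (hN : 𝓑.IsBounded (N : Set A)) : 𝓑.IsBounded ((M ⊔ N : Submodule V A) : Set A) := by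
  have h : (M ⊔ N : Submodule V A) = Submodule.span V ((M : Set A) ∪ (N : Set A)) := by
    rw [Submodule.span_union, Submodule.span_eq, Submodule.span_eq]
  rw [h]
  exact 𝓑.isBounded_span (𝓑.isBounded_union hM hN)

theorem bdd_finsetSup (t : Finset ℕ) (f : ℕ → Submodule V A)
    (h : ∀ n ∈ t, 𝓑.IsBounded ((f n : Submodule V A) : Set A)) :
    𝓑.IsBounded ((t.sup f : Submodule V A) : Set A) := by
  induction t using Finset.cons_induction with
  | empty =>
    simp only [Finset.sup_empty]
    exact 𝓑.isBounded_subset (bdd_one 𝓑) (by intro x hx; simp_all)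
  | cons a t ha ih =>
    rw [Finset.sup_cons]
    exact bdd_sup (h a (Finset.mem_cons_self a t)) (ih fun n hn => h n (Finset.mem_cons_of_mem hn))

theorem smul_submodule_le {c : V} {M N : Submodule V A} (h : M ≤ N) : c • M ≤ c • N := by
  rintro x ⟨y, hy, rfl⟩
  exact ⟨y, h hy, rfl⟩

theorem pow_smul_le_of_le {c : V} {a b : ℕ} (h : b ≤ a) (M : Submodule V A) :
    c ^ a • M ≤ c ^ b • M := by
  intro x hx
  obtain ⟨y, hy, hxy⟩ := hx
  refine ⟨c ^ (a - b) • y, Submodule.smul_le_self_of_tower (c ^ (a - b)) M ⟨y, hy, rfl⟩, ?_⟩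
  show c ^ b • (c ^ (a - b) • y) = x
  have hx2 : c ^ a • y = x := hxy
  rw [← hx2, smul_smul, ← pow_add, Nat.add_sub_cancel' h]

end AlgBdd

end Part1

end Born
namespace Born

section Spec

variable {V : Type u} [CommRing V]
variable {R : Type u} [Ring R] [Algebra V R] {S : Type u} [Ring S] [Algebra V S]

theorem ceil_arith {c : ℝ} (hc : 0 < c) :
    ∃ n₀ : ℕ, ∀ n : ℕ, n₀ ≤ n →
      2 * (⌈(n : ℝ) * (c / 4)⌉.toNat) ≤ (⌈(n : ℝ) * c⌉).toNat := by
  refine ⟨⌈4 / c⌉₊, fun n hn => ?_⟩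
  have h4 : (4 : ℝ) ≤ n * c := by
    have h1 : (4 : ℝ) / c ≤ n := le_trans (Nat.le_ceil _) (by exact_mod_cast hn)
    have h2 := mul_le_mul_of_nonneg_right h1 hc.le
    rwa [div_mul_cancel₀ _ (ne_of_gt hc)] at h2
  have h0 : (0 : ℤ) ≤ ⌈(n : ℝ) * (c / 4)⌉ := Int.ceil_nonneg (by positivity)
  have hZ : 2 * ⌈(n : ℝ) * (c / 4)⌉ ≤ ⌈(n : ℝ) * c⌉ := by
    have h1 : (⌈(n : ℝ) * (c / 4)⌉ : ℝ) < (n : ℝ) * (c / 4) + 1 := Int.ceil_lt_add_one _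
    have h2 : ((2 * ⌈(n : ℝ) * (c / 4)⌉ : ℤ) : ℝ) < (n : ℝ) * c := by
      push_cast
      nlinarith
    have h3 := lt_of_lt_of_le h2 (Int.le_ceil _)
    exact_mod_cast h3.le
  omega

theorem pow_le_pow_submodule {A : Type v} [Ring A] [Algebra V A] {M N : Submodule V A}
    (h : M ≤ N) : ∀ n : ℕ, M ^ n ≤ N ^ n := by
  intro n
  induction n with
  | zero => simp
  | succ n ih => rw [pow_succ, pow_succ]; exact mul_le_mul' ih h

theorem smul_tsp_le (c : V) (M : Submodule V R) (N : Submodule V S) :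
    (c * c) • tsp M N ≤ tsp (c • M) (c • N) := by
  intro x hx
  obtain ⟨z, hz, hxz⟩ := hx
  have hx2 : (c * c) • z = x := hxz
  rw [← hx2]
  clear hxz hx2
  refine Submodule.span_induction (p := fun z _ => (c * c) • z ∈ tsp (c • M) (c • N))
    ?_ ?_ ?_ ?_ hz
  · rintro - ⟨m, hm, n, hn, rfl⟩
    show (c * c) • (m ⊗ₜ[V] n) ∈ tsp (c • M) (c • N)
    have key : (c * c) • (m ⊗ₜ[V] n) = (c • m) ⊗ₜ[V] (c • n) := by
      rw [TensorProduct.smul_tmul', mul_smul, TensorProduct.smul_tmul]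
    rw [key]
    exact Submodule.subset_span ⟨c • m, ⟨m, hm, rfl⟩, c • n, ⟨n, hn, rfl⟩, rfl⟩
  · show (c * c) • (0 : R ⊗[V] S) ∈ tsp (c • M) (c • N)
    rw [smul_zero]; exact Submodule.zero_mem _
  · intro a b _ _ ha hb
    show (c * c) • (a + b) ∈ tsp (c • M) (c • N)
    rw [smul_add]; exact Submodule.add_mem _ ha hb
  · intro v a _ ha
    show (c * c) • (v • a) ∈ tsp (c • M) (c • N)
    rw [smul_comm]; exact Submodule.smul_mem _ _ ha

set_option maxHeartbeats 1000000 in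
theorem tensor_spec (π : V) {ε : ℝ} (hε0 : 0 < ε) (hε1 : ε < 1)
    {𝓛R : ModBornology V R} {𝓛S : ModBornology V S}
    (halgR : IsAlgBorn 𝓛R) (halgS : IsAlgBorn 𝓛S)
    (hRspec : ∀ M : Submodule V R, 𝓛R.IsBounded (M : Set R) → SpecLeOne π ε 𝓛R M)
    (hSspec : ∀ N : Submodule V S, 𝓛S.IsBounded (N : Set S) → SpecLeOne π ε 𝓛S N)
    {𝓣' : ModBornology V (R ⊗[V] S)} (h𝓣' : IsTensorBorn 𝓛R 𝓛S 𝓣')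
    (P : Submodule V (R ⊗[V] S)) (hP : 𝓣'.IsBounded (P : Set (R ⊗[V] S))) :
    SpecLeOne π ε 𝓣' P := by
  intro r hr
  obtain ⟨M, N, hM, hN, hsub⟩ := (h𝓣' _).mp hP
  have hPle : P ≤ tsp M N := fun x hx => hsub hx
  have hr0 : (0 : ℝ) < r := lt_trans one_pos hr
  set s : ℝ := r ^ ((4 : ℝ)⁻¹) with hs_def
  have hs1 : 1 < s := by
    rw [hs_def]
    rw [Real.one_lt_rpow_iff_of_pos hr0]
    exact Or.inl ⟨hr, by norm_num⟩
  have hlε : Real.log ε < 0 := Real.log_neg hε0 hε1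
  have hne : Real.log ε ≠ 0 := ne_of_lt hlε
  set c : ℝ := Real.log r / (-Real.log ε) with hc_def
  have hc : 0 < c := div_pos (Real.log_pos hr) (by linarith)
  have hcexpr : ∀ n : ℕ, cexp ε (r ^ (-(n : ℤ))) = ⌈(n : ℝ) * c⌉ := by
    intro n
    unfold cexp
    congr 1
    rw [Real.log_zpow, hc_def]
    push_cast
    have hneg : -Real.log ε ≠ 0 := by simpa using hne
    rw [← mul_div_assoc, div_eq_div_iff hne hneg]
    ring
  have hcexps : ∀ n : ℕ, cexp ε (s ^ (-(n : ℤ))) = ⌈(n : ℝ) * (c / 4)⌉ := by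
    intro n
    unfold cexp
    congr 1
    rw [Real.log_zpow, hs_def, Real.log_rpow hr0, hc_def]
    push_cast
    have hneg : -Real.log ε * 4 ≠ 0 :=
      mul_ne_zero (by simpa using hne) (by norm_num)
    rw [div_div, ← mul_div_assoc, div_eq_div_iff hne hneg]
    ring
  obtain ⟨n₀, hn₀⟩ := ceil_arith hc
  have hGM : 𝓛R.IsBounded ((geomSumV π ε s M : Submodule V R) : Set R) := hRspec M hM s hs1
  have hGN : 𝓛S.IsBounded ((geomSumV π ε s N : Submodule V S) : Set S) := hSspec N hN s hs1
  -- each term is dominated by the tensor-span of powers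
  have hterm : ∀ n : ℕ, starV π ε (r ^ (-(n : ℤ))) (P ^ n) ≤ tsp (M ^ n) (N ^ n) := by
    intro n
    show π ^ ((cexp ε (r ^ (-(n : ℤ)))).toNat) • (P ^ n) ≤ tsp (M ^ n) (N ^ n)
    refine le_trans (Submodule.smul_le_self_of_tower _ _) ?_
    exact le_trans (pow_le_pow_submodule hPle n) (tsp_pow_le M N n)
  -- for large n, dominated by the geometric sums
  have hmain : ∀ n : ℕ, n₀ ≤ n → starV π ε (r ^ (-(n : ℤ))) (P ^ n) ≤
      tsp (geomSumV π ε s M) (geomSumV π ε s N) := by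
    intro n hn
    have key : 2 * (cexp ε (s ^ (-(n : ℤ)))).toNat ≤ (cexp ε (r ^ (-(n : ℤ)))).toNat := by
      rw [hcexpr, hcexps]
      exact hn₀ n hn
    set bn := (cexp ε (s ^ (-(n : ℤ)))).toNat with hbn
    show π ^ ((cexp ε (r ^ (-(n : ℤ)))).toNat) • (P ^ n) ≤ _
    calc π ^ ((cexp ε (r ^ (-(n : ℤ)))).toNat) • (P ^ n)
        ≤ π ^ ((cexp ε (r ^ (-(n : ℤ)))).toNat) • tsp (M ^ n) (N ^ n) :=
          smul_submodule_le (le_trans (pow_le_pow_submodule hPle n) (tsp_pow_le M N n))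
      _ ≤ π ^ (2 * bn) • tsp (M ^ n) (N ^ n) := pow_smul_le_of_le key _
      _ ≤ tsp (π ^ bn • M ^ n) (π ^ bn • N ^ n) := by
          have h2 : π ^ (2 * bn) = π ^ bn * π ^ bn := by rw [← pow_add, two_mul]
          rw [h2]
          exact smul_tsp_le _ _ _
      _ ≤ tsp (geomSumV π ε s M) (geomSumV π ε s N) := by
          refine tsp_mono ?_ ?_
          · exact le_iSup (fun k : ℕ => starV π ε (s ^ (-(k : ℤ))) (M ^ k)) n
          · exact le_iSup (fun k : ℕ => starV π ε (s ^ (-(k : ℤ))) (N ^ k)) n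
  -- assemble
  set F : Submodule V (R ⊗[V] S) :=
    (Finset.range n₀).sup (fun n => starV π ε (r ^ (-(n : ℤ))) (P ^ n)) with hF
  have hle : geomSumV π ε r P ≤ F ⊔ tsp (geomSumV π ε s M) (geomSumV π ε s N) := by
    refine iSup_le fun n => ?_
    rcases lt_or_ge n n₀ with h | h
    · have h1 : starV π ε (r ^ (-(n : ℤ))) (P ^ n) ≤ F :=
        Finset.le_sup (f := fun k : ℕ => starV π ε (r ^ (-(k : ℤ))) (P ^ k))
          (Finset.mem_range.mpr h)
      exact le_sup_of_le_left h1
    · exact le_sup_of_le_right (hmain n h)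
  have hFbdd : 𝓣'.IsBounded (F : Set (R ⊗[V] S)) := by
    refine bdd_finsetSup _ _ fun n _ => ?_
    refine 𝓣'.isBounded_subset ?_ (fun x hx => hterm n hx)
    exact (h𝓣' _).mpr ⟨M ^ n, N ^ n, bdd_pow halgR hM n, bdd_pow halgS hN n, subset_rfl⟩
  have hTbdd : 𝓣'.IsBounded
      ((tsp (geomSumV π ε s M) (geomSumV π ε s N) : Submodule V (R ⊗[V] S)) : Set (R ⊗[V] S)) :=
    (h𝓣' _).mpr ⟨geomSumV π ε s M, geomSumV π ε s N, hGM, hGN, subset_rfl⟩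
  exact 𝓣'.isBounded_subset (bdd_sup hFbdd hTbdd) (fun x hx => hle hx)

end Spec

end Born
namespace Born

section Part1Main

variable {V : Type u} [CommRing V]
variable {R : Type u} [Ring R] [Algebra V R] {S : Type u} [Ring S] [Algebra V S]

set_option maxHeartbeats 1000000 in
theorem part1_iff (π : V) {ε : ℝ} (hε0 : 0 < ε) (hε1 : ε < 1)
    (𝓑R : ModBornology V R) (𝓑S : ModBornology V S)
    (𝓛R : ModBornology V R) (h𝓛R : IsLinGrowthBorn π ε 𝓑R 𝓛R)
    (𝓛S : ModBornology V S) (h𝓛S : IsLinGrowthBorn π ε 𝓑S 𝓛S)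
    (𝓣 : ModBornology V (R ⊗[V] S)) (h𝓣 : IsTensorBorn 𝓑R 𝓑S 𝓣)
    (𝓛T : ModBornology V (R ⊗[V] S)) (h𝓛T : IsLinGrowthBorn π ε 𝓣 𝓛T)
    (𝓣' : ModBornology V (R ⊗[V] S)) (h𝓣' : IsTensorBorn 𝓛R 𝓛S 𝓣') :
    ∀ U : Set (R ⊗[V] S), 𝓛T.IsBounded U ↔ 𝓣'.IsBounded U := by
  -- 𝓣' is an algebra bornology
  have halg' : IsAlgBorn 𝓣' := by
    intro s t hs ht
    obtain ⟨M, N, hM, hN, hsub⟩ := (h𝓣' s).mp hs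
    obtain ⟨M', N', hM', hN', hsub'⟩ := (h𝓣' t).mp ht
    refine (h𝓣' _).mpr ⟨M * M', N * N', bdd_mul_submodule h𝓛R.1 hM hM',
      bdd_mul_submodule h𝓛S.1 hN hN', ?_⟩
    rintro - ⟨a, ha, b, hb, rfl⟩
    exact tsp_mul_le M M' N N' (Submodule.mul_mem_mul (hsub ha) (hsub' hb))
  -- 𝓣 ≤ 𝓣'
  have hle𝓣 : BornLE 𝓣 𝓣' := by
    intro s hs
    obtain ⟨M, N, hM, hN, hsub⟩ := (h𝓣 s).mp hs
    exact (h𝓣' s).mpr ⟨M, N, h𝓛R.2.1 hM, h𝓛S.2.1 hN, hsub⟩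
  -- bounded submodules of 𝓣' have spectral radius at most one
  have hspec' : ∀ P : Submodule V (R ⊗[V] S),
      𝓣'.IsBounded (P : Set (R ⊗[V] S)) → SpecLeOne π ε 𝓣' P :=
    fun P hP => tensor_spec π hε0 hε1 h𝓛R.1 h𝓛S.1 h𝓛R.2.2.1 h𝓛S.2.2.1 h𝓣' P hP
  have hfwd : BornLE 𝓛T 𝓣' := h𝓛T.2.2.2 𝓣' halg' hle𝓣 hspec'
  -- backward direction: pull back 𝓛T along the two inclusions
  have hjRle : BornLE 𝓛R (pullBorn (Algebra.TensorProduct.includeLeft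
      (R := V) (A := R) (B := S) (S := V)).toLinearMap 𝓛T) := by
    refine h𝓛R.2.2.2 _ (pullBorn_isAlgBorn _ h𝓛T.1) ?_ (pullBorn_spec π ε _ h𝓛T.2.2.1)
    intro s hs
    show 𝓛T.IsBounded ((Algebra.TensorProduct.includeLeft
      (R := V) (A := R) (B := S) (S := V)).toLinearMap '' s)
    apply h𝓛T.2.1
    refine (h𝓣 _).mpr ⟨Submodule.span V s, Submodule.span V {1}, 𝓑R.isBounded_span hs,
      𝓑S.isBounded_span (𝓑S.isBounded_of_finite (Set.finite_singleton _)), ?_⟩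
    rintro - ⟨x, hx, rfl⟩
    exact Submodule.subset_span
      ⟨x, Submodule.subset_span hx, 1, Submodule.subset_span rfl, rfl⟩
  have hjSle : BornLE 𝓛S (pullBorn (Algebra.TensorProduct.includeRight
      (R := V) (A := R) (B := S)).toLinearMap 𝓛T) := by
    refine h𝓛S.2.2.2 _ (pullBorn_isAlgBorn _ h𝓛T.1) ?_ (pullBorn_spec π ε _ h𝓛T.2.2.1)
    intro s hs
    show 𝓛T.IsBounded ((Algebra.TensorProduct.includeRight
      (R := V) (A := R) (B := S)).toLinearMap '' s)
    apply h𝓛T.2.1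
    refine (h𝓣 _).mpr ⟨Submodule.span V {1}, Submodule.span V s,
      𝓑R.isBounded_span (𝓑R.isBounded_of_finite (Set.finite_singleton _)),
      𝓑S.isBounded_span hs, ?_⟩
    rintro - ⟨x, hx, rfl⟩
    exact Submodule.subset_span
      ⟨1, Submodule.subset_span rfl, x, Submodule.subset_span hx, rfl⟩
  have hbwd : BornLE 𝓣' 𝓛T := by
    intro U hU
    obtain ⟨M, N, hM, hN, hsub⟩ := (h𝓣' U).mp hU
    have hMT : 𝓛T.IsBounded ((Algebra.TensorProduct.includeLeft
      (R := V) (A := R) (B := S) (S := V)).toLinearMap '' (M : Set R)) := hjRle hM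
    have hNT : 𝓛T.IsBounded ((Algebra.TensorProduct.includeRight
      (R := V) (A := R) (B := S)).toLinearMap '' (N : Set S)) := hjSle hN
    have hprod := h𝓛T.1 hMT hNT
    apply 𝓛T.isBounded_subset (𝓛T.isBounded_span hprod)
    refine subset_trans hsub ?_
    have hspan : tsp M N ≤ Submodule.span V
        ((Algebra.TensorProduct.includeLeft
          (R := V) (A := R) (B := S) (S := V)).toLinearMap '' (M : Set R) *
         (Algebra.TensorProduct.includeRight
          (R := V) (A := R) (B := S)).toLinearMap '' (N : Set S)) := by
      apply Submodule.span_le.mpr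
      rintro - ⟨m, hm, n, hn, rfl⟩
      refine Submodule.subset_span ⟨m ⊗ₜ[V] 1, ⟨m, hm, rfl⟩, (1 : R) ⊗ₜ[V] n, ⟨n, hn, rfl⟩, ?_⟩
      show (m ⊗ₜ[V] (1 : S)) * ((1 : R) ⊗ₜ[V] n) = m ⊗ₜ[V] n
      rw [Algebra.TensorProduct.tmul_mul_tmul, mul_one, one_mul]
    exact fun x hx => hspan hx
  exact fun U => ⟨fun h => hfwd h, fun h => hbwd h⟩

end Part1Main

end Born
namespace Born

section Part2

variable {V : Type u} [CommRing V]
variable {R : Type u} [Ring R] [Algebra V R] {S : Type u} [Ring S] [Algebra V S]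

set_option maxHeartbeats 2000000 in
theorem part2 (π : V)
    (𝓛R : ModBornology V R) (𝓛S : ModBornology V S)
    (𝓛T : ModBornology V (R ⊗[V] S)) (hT : IsTensorBorn 𝓛R 𝓛S 𝓛T)
    (CR : Type u) [AddCommGroup CR] [Module V CR] (𝓑CR : ModBornology V CR)
    (ιR : R →ₗ[V] CR) (hCR : IsCompletion π 𝓛R 𝓑CR ιR)
    (CS : Type u) [AddCommGroup CS] [Module V CS] (𝓑CS : ModBornology V CS)
    (ιS : S →ₗ[V] CS) (hCS : IsCompletion π 𝓛S 𝓑CS ιS)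
    (CT : Type u) [AddCommGroup CT] [Module V CT] (𝓑CT : ModBornology V CT)
    (ιT : R ⊗[V] S →ₗ[V] CT) (hCT : IsCompletion π 𝓛T 𝓑CT ιT) :
    ∃ β : CR →ₗ[V] CS →ₗ[V] CT,
      BoundedBilin 𝓑CR 𝓑CS 𝓑CT β ∧
      (∀ (r : R) (s : S), β (ιR r) (ιS s) = ιT (r ⊗ₜ[V] s)) ∧
      ∀ (W : Type u) (_ : AddCommGroup W) (_ : Module V W) (𝓑W : ModBornology V W),
        BornComplete π 𝓑W → ∀ γ : CR →ₗ[V] CS →ₗ[V] W, BoundedBilin 𝓑CR 𝓑CS 𝓑W γ →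
        ∃! h : CT →ₗ[V] W, BoundedMap 𝓑CT 𝓑W h ∧ ∀ (x : CR) (y : CS),
          h (β x y) = γ x y := by
  classical
  have htsp : ∀ (M : Submodule V R) (N : Submodule V S), 𝓛R.IsBounded (M : Set R) →
      𝓛S.IsBounded (N : Set S) → 𝓛T.IsBounded ((tsp M N : Submodule V (R ⊗[V] S)) :
        Set (R ⊗[V] S)) :=
    fun M N hM hN => (hT _).mpr ⟨M, N, hM, hN, subset_rfl⟩
  -- the one-sided tensor maps are bounded
  have hmkbdd : ∀ r : R, BoundedMap 𝓛S 𝓛T (TensorProduct.mk V R S r) := by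
    intro r t ht
    apply 𝓛T.isBounded_subset (htsp (Submodule.span V {r}) (Submodule.span V t)
      (𝓛R.isBounded_span (𝓛R.isBounded_of_finite (Set.finite_singleton _)))
      (𝓛S.isBounded_span ht))
    rintro - ⟨x, hx, rfl⟩
    exact Submodule.subset_span ⟨r, Submodule.subset_span rfl, x, Submodule.subset_span hx, rfl⟩
  have hφbdd : ∀ r : R, BoundedMap 𝓛S 𝓑CT (ιT ∘ₗ TensorProduct.mk V R S r) :=
    fun r => BoundedMap.comp' hCT.2.1 (hmkbdd r)
  -- extension of the partial multiplication maps to CS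
  have ψfull : ∀ r : R, ∃! g : CS →ₗ[V] CT, BoundedMap 𝓑CS 𝓑CT g ∧
      g.comp ιS = ιT ∘ₗ TensorProduct.mk V R S r :=
    fun r => hCS.2.2 CT inferInstance inferInstance 𝓑CT hCT.1 _ (hφbdd r)
  set ψ : R → (CS →ₗ[V] CT) := fun r => (ψfull r).choose with hψdef
  have ψbdd : ∀ r, BoundedMap 𝓑CS 𝓑CT (ψ r) := fun r => (ψfull r).choose_spec.1.1
  have ψcomp : ∀ r, (ψ r).comp ιS = ιT ∘ₗ TensorProduct.mk V R S r :=
    fun r => (ψfull r).choose_spec.1.2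
  have ψapp : ∀ (r : R) (s : S), ψ r (ιS s) = ιT (r ⊗ₜ[V] s) :=
    fun r s => LinearMap.congr_fun (ψcomp r) s
  have ψuniq : ∀ (r : R) (g : CS →ₗ[V] CT), BoundedMap 𝓑CS 𝓑CT g →
      g.comp ιS = ιT ∘ₗ TensorProduct.mk V R S r → g = ψ r := by
    intro r g hb hc
    exact ExistsUnique.unique (ψfull r) ⟨hb, hc⟩ ⟨ψbdd r, ψcomp r⟩
  have ψadd : ∀ r r' : R, ψ (r + r') = ψ r + ψ r' := by
    intro r r'
    refine (ψuniq (r + r') (ψ r + ψ r') (BoundedMap.add' (ψbdd r) (ψbdd r')) ?_).symm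
    apply LinearMap.ext
    intro s
    show ψ r (ιS s) + ψ r' (ιS s) = ιT ((r + r') ⊗ₜ[V] s)
    rw [ψapp, ψapp, TensorProduct.add_tmul, map_add]
  have ψsmul : ∀ (c : V) (r : R), ψ (c • r) = c • ψ r := by
    intro c r
    refine (ψuniq (c • r) (c • ψ r) (BoundedMap.smul' c (ψbdd r)) ?_).symm
    apply LinearMap.ext
    intro s
    show c • (ψ r (ιS s)) = ιT ((c • r) ⊗ₜ[V] s)
    rw [ψapp, ← TensorProduct.smul_tmul', map_smul]
  -- Step B : uniform boundedness of ψ over bounded sets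
  have stepB : ∀ (M : Submodule V R), 𝓛R.IsBounded (M : Set R) →
      ∀ (T : Set CS), 𝓑CS.IsBounded T →
      𝓑CT.IsBounded {z : CT | ∃ r ∈ M, ∃ y ∈ T, ψ r y = z} := by
    intro M hM T hTb
    -- bounded functions on M
    have hΦmem : ∀ s : S, (fun p : M => ιT (p.1 ⊗ₜ[V] s)) ∈ bddFn 𝓑CT M := by
      intro s
      refine ⟨ιT '' ((tsp M (Submodule.span V {s}) : Submodule V (R ⊗[V] S)) :
        Set (R ⊗[V] S)), hCT.2.1 (htsp _ _ hM (𝓛S.isBounded_span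
          (𝓛S.isBounded_of_finite (Set.finite_singleton _)))), fun p => ?_⟩
      refine Submodule.subset_span ⟨p.1 ⊗ₜ[V] s, ?_, rfl⟩
      exact Submodule.subset_span ⟨p.1, p.2, s, Submodule.subset_span rfl, rfl⟩
    set Φ : S →ₗ[V] bddFn 𝓑CT M :=
      { toFun := fun s => ⟨fun p : M => ιT (p.1 ⊗ₜ[V] s), hΦmem s⟩
        map_add' := by
          intro s s'
          apply Subtype.ext
          funext p
          show ιT (p.1 ⊗ₜ[V] (s + s')) = ιT (p.1 ⊗ₜ[V] s) + ιT (p.1 ⊗ₜ[V] s')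
          rw [TensorProduct.tmul_add, map_add]
        map_smul' := by
          intro c s
          apply Subtype.ext
          funext p
          show ιT (p.1 ⊗ₜ[V] (c • s)) = c • ιT (p.1 ⊗ₜ[V] s)
          rw [TensorProduct.tmul_smul, map_smul] } with hΦdef
    have hΦbdd : BoundedMap 𝓛S (bddFnBorn 𝓑CT M) Φ := by
      intro t ht
      refine ⟨ιT '' ((tsp M (Submodule.span V t) : Submodule V (R ⊗[V] S)) :
        Set (R ⊗[V] S)), hCT.2.1 (htsp _ _ hM (𝓛S.isBounded_span ht)), ?_⟩
      rintro - ⟨s, hst, rfl⟩ p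
      refine Submodule.subset_span ⟨p.1 ⊗ₜ[V] s, ?_, rfl⟩
      exact Submodule.subset_span ⟨p.1, p.2, s, Submodule.subset_span hst, rfl⟩
    obtain ⟨G, ⟨hGbdd, hGcomp⟩, hGuniq⟩ := hCS.2.2 (bddFn 𝓑CT M) inferInstance inferInstance
      (bddFnBorn 𝓑CT M) (bddFnBorn_complete π hCT.1) Φ hΦbdd
    -- evaluations agree with ψ
    have hev : ∀ (r : R) (hr : r ∈ M) (y : CS), ψ r y = (G y : M → CT) ⟨r, hr⟩ := by
      intro r hr y
      set ev : bddFn 𝓑CT M →ₗ[V] CT :=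
        { toFun := fun g => (g : M → CT) ⟨r, hr⟩
          map_add' := fun g g' => rfl
          map_smul' := fun c g => rfl } with hevdef
      have hevbdd : BoundedMap (bddFnBorn 𝓑CT M) 𝓑CT ev := by
        rintro s ⟨B, hB, hmem⟩
        apply bdd_of_subset_span hB
        rintro - ⟨g, hg, rfl⟩
        exact hmem g hg ⟨r, hr⟩
      have : ev.comp G = ψ r := by
        refine ψuniq r _ (BoundedMap.comp' hevbdd hGbdd) ?_
        apply LinearMap.ext
        intro s
        show ev (G (ιS s)) = ιT (r ⊗ₜ[V] s)
        rw [show G (ιS s) = Φ s from LinearMap.congr_fun hGcomp s]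
        rfl
      exact (LinearMap.congr_fun this y).symm
    obtain ⟨B, hB, hmem⟩ := hGbdd hTb
    apply bdd_of_subset_span hB
    rintro - ⟨r, hr, y, hy, rfl⟩
    rw [hev r hr y]
    exact hmem (G y) ⟨y, hy, rfl⟩ ⟨r, hr⟩
  -- Step C : extend in the first variable
  set ρ : CS → (R →ₗ[V] CT) := fun y =>
    { toFun := fun r => ψ r y
      map_add' := by
        intro r r'
        show ψ (r + r') y = ψ r y + ψ r' y
        rw [ψadd]; rfl
      map_smul' := by
        intro c r
        show ψ (c • r) y = c • ψ r y
        rw [ψsmul]; rfl } with hρdef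
  have ρbdd : ∀ y : CS, BoundedMap 𝓛R 𝓑CT (ρ y) := by
    intro y s hs
    apply 𝓑CT.isBounded_subset (stepB (Submodule.span V s) (𝓛R.isBounded_span hs)
      {y} (𝓑CS.isBounded_of_finite (Set.finite_singleton _)))
    rintro - ⟨r, hr, rfl⟩
    exact ⟨r, Submodule.subset_span hr, y, rfl, rfl⟩
  have χfull : ∀ y : CS, ∃! g : CR →ₗ[V] CT, BoundedMap 𝓑CR 𝓑CT g ∧ g.comp ιR = ρ y :=
    fun y => hCR.2.2 CT inferInstance inferInstance 𝓑CT hCT.1 _ (ρbdd y)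
  set χ : CS → (CR →ₗ[V] CT) := fun y => (χfull y).choose with hχdef
  have χbdd : ∀ y, BoundedMap 𝓑CR 𝓑CT (χ y) := fun y => (χfull y).choose_spec.1.1
  have χcomp : ∀ y, (χ y).comp ιR = ρ y := fun y => (χfull y).choose_spec.1.2
  have χuniq : ∀ (y : CS) (g : CR →ₗ[V] CT), BoundedMap 𝓑CR 𝓑CT g →
      g.comp ιR = ρ y → g = χ y := by
    intro y g hb hc
    exact ExistsUnique.unique (χfull y) ⟨hb, hc⟩ ⟨χbdd y, χcomp y⟩
  have χadd : ∀ y y' : CS, χ (y + y') = χ y + χ y' := by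
    intro y y'
    refine (χuniq (y + y') (χ y + χ y') (BoundedMap.add' (χbdd y) (χbdd y')) ?_).symm
    apply LinearMap.ext
    intro r
    show χ y (ιR r) + χ y' (ιR r) = ρ (y + y') r
    rw [show χ y (ιR r) = ρ y r from LinearMap.congr_fun (χcomp y) r,
      show χ y' (ιR r) = ρ y' r from LinearMap.congr_fun (χcomp y') r]
    show ψ r y + ψ r y' = ψ r (y + y')
    rw [map_add]
  have χsmul : ∀ (c : V) (y : CS), χ (c • y) = c • χ y := by
    intro c y
    refine (χuniq (c • y) (c • χ y) (BoundedMap.smul' c (χbdd y)) ?_).symm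
    apply LinearMap.ext
    intro r
    show c • (χ y (ιR r)) = ρ (c • y) r
    rw [show χ y (ιR r) = ρ y r from LinearMap.congr_fun (χcomp y) r]
    show c • (ψ r y) = ψ r (c • y)
    rw [map_smul]
  -- the bilinear map β
  set β : CR →ₗ[V] CS →ₗ[V] CT := LinearMap.mk₂ V (fun x y => χ y x)
    (fun x x' y => by
      show χ y (x + x') = χ y x + χ y x'
      rw [map_add])
    (fun c x y => by
      show χ y (c • x) = c • χ y x
      rw [map_smul])
    (fun x y y' => by
      show χ (y + y') x = χ y x + χ y' x
      rw [χadd]; rfl)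
    (fun c x y => by
      show χ (c • y) x = c • χ y x
      rw [χsmul]; rfl) with hβdef
  have βapp : ∀ (x : CR) (y : CS), β x y = χ y x := fun x y => rfl
  have hβcompat : ∀ (r : R) (s : S), β (ιR r) (ιS s) = ιT (r ⊗ₜ[V] s) := by
    intro r s
    rw [βapp, show χ (ιS s) (ιR r) = ρ (ιS s) r from LinearMap.congr_fun (χcomp (ιS s)) r]
    show ψ r (ιS s) = ιT (r ⊗ₜ[V] s)
    exact ψapp r s
  -- β is bounded bilinear
  have hβbdd : BoundedBilin 𝓑CR 𝓑CS 𝓑CT β := by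
    intro s t hs ht
    set P : Submodule V CS := Submodule.span V t with hPdef
    have hP : 𝓑CS.IsBounded (P : Set CS) := 𝓑CS.isBounded_span ht
    have hΦ'mem : ∀ r : R, (fun p : P => ψ r p.1) ∈ bddFn 𝓑CT P := by
      intro r
      refine ⟨{z : CT | ∃ a ∈ Submodule.span V {r}, ∃ y ∈ (P : Set CS), ψ a y = z},
        stepB _ (𝓛R.isBounded_span (𝓛R.isBounded_of_finite (Set.finite_singleton _))) _ hP,
        fun p => ?_⟩
      exact Submodule.subset_span ⟨r, Submodule.subset_span rfl, p.1, p.2, rfl⟩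
    set Φ' : R →ₗ[V] bddFn 𝓑CT P :=
      { toFun := fun r => ⟨fun p : P => ψ r p.1, hΦ'mem r⟩
        map_add' := by
          intro r r'
          apply Subtype.ext
          funext p
          show ψ (r + r') p.1 = ψ r p.1 + ψ r' p.1
          rw [ψadd]; rfl
        map_smul' := by
          intro c r
          apply Subtype.ext
          funext p
          show ψ (c • r) p.1 = c • ψ r p.1
          rw [ψsmul]; rfl } with hΦ'def
    have hΦ'bdd : BoundedMap 𝓛R (bddFnBorn 𝓑CT P) Φ' := by
      intro sR hsR
      refine ⟨{z : CT | ∃ a ∈ Submodule.span V sR, ∃ y ∈ (P : Set CS), ψ a y = z},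
        stepB _ (𝓛R.isBounded_span hsR) _ hP, ?_⟩
      rintro - ⟨r, hrs, rfl⟩ p
      exact Submodule.subset_span ⟨r, Submodule.subset_span hrs, p.1, p.2, rfl⟩
    obtain ⟨G', ⟨hG'bdd, hG'comp⟩, hG'uniq⟩ := hCR.2.2 (bddFn 𝓑CT P) inferInstance inferInstance
      (bddFnBorn 𝓑CT P) (bddFnBorn_complete π hCT.1) Φ' hΦ'bdd
    have hev' : ∀ (y : CS) (hy : y ∈ P) (x : CR), χ y x = (G' x : P → CT) ⟨y, hy⟩ := by
      intro y hy x
      set ev : bddFn 𝓑CT P →ₗ[V] CT :=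
        { toFun := fun g => (g : P → CT) ⟨y, hy⟩
          map_add' := fun g g' => rfl
          map_smul' := fun c g => rfl } with hevdef
      have hevbdd : BoundedMap (bddFnBorn 𝓑CT P) 𝓑CT ev := by
        rintro sW ⟨B, hB, hmem⟩
        apply bdd_of_subset_span hB
        rintro - ⟨g, hg, rfl⟩
        exact hmem g hg ⟨y, hy⟩
      have : ev.comp G' = χ y := by
        refine χuniq y _ (BoundedMap.comp' hevbdd hG'bdd) ?_
        apply LinearMap.ext
        intro r
        show ev (G' (ιR r)) = ρ y r
        rw [show G' (ιR r) = Φ' r from LinearMap.congr_fun hG'comp r]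
        rfl
      exact (LinearMap.congr_fun this x).symm
    obtain ⟨B, hB, hmem⟩ := hG'bdd hs
    apply bdd_of_subset_span hB
    rintro - ⟨x, hx, y, hy, rfl⟩
    show β x y ∈ (Submodule.span V B : Set CT)
    rw [βapp, hev' y (Submodule.subset_span hy) x]
    exact hmem (G' x) ⟨x, hx, rfl⟩ ⟨y, Submodule.subset_span hy⟩
  -- the universal property
  refine ⟨β, hβbdd, hβcompat, ?_⟩
  intro W _ _ 𝓑W hWc γ hγ
  -- the induced bounded map on R ⊗ S
  set bil : R →ₗ[V] S →ₗ[V] W := (γ.comp ιR).compl₂ ιS with hbildef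
  set g0 : R ⊗[V] S →ₗ[V] W := TensorProduct.lift bil with hg0def
  have hg0tmul : ∀ (r : R) (s : S), g0 (r ⊗ₜ[V] s) = γ (ιR r) (ιS s) := by
    intro r s
    rw [hg0def]
    exact TensorProduct.lift.tmul r s
  have hg0bdd : BoundedMap 𝓛T 𝓑W g0 := by
    intro U hU
    obtain ⟨M, N, hM, hN, hsub⟩ := (hT U).mp hU
    have himg : g0 '' U ⊆ (Submodule.span V (Set.image2 (fun x y => γ x y)
        (ιR '' (M : Set R)) (ιS '' (N : Set S))) : Set W) := by
      rintro - ⟨x, hx, rfl⟩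
      have hx2 : x ∈ tsp M N := hsub hx
      refine Submodule.span_induction (p := fun z _ => g0 z ∈ Submodule.span V
        (Set.image2 (fun x y => γ x y) (ιR '' (M : Set R)) (ιS '' (N : Set S))))
        ?_ ?_ ?_ ?_ hx2
      · rintro - ⟨m, hm, n, hn, rfl⟩
        show g0 (m ⊗ₜ[V] n) ∈ _
        rw [hg0tmul]
        exact Submodule.subset_span ⟨ιR m, ⟨m, hm, rfl⟩, ιS n, ⟨n, hn, rfl⟩, rfl⟩
      · show g0 0 ∈ _
        rw [map_zero]; exact Submodule.zero_mem _
      · intro a b _ _ ha hb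
        show g0 (a + b) ∈ _
        rw [map_add]; exact Submodule.add_mem _ ha hb
      · intro c a _ ha
        show g0 (c • a) ∈ _
        rw [map_smul]; exact Submodule.smul_mem _ _ ha
    exact bdd_of_subset_span (hγ (hCR.2.1 hM) (hCS.2.1 hN)) himg
  obtain ⟨h, ⟨hhbdd, hhcomp⟩, hhuniq⟩ := hCT.2.2 W inferInstance inferInstance 𝓑W hWc g0 hg0bdd
  have hβsingleR : ∀ x : CR, BoundedMap 𝓑CS 𝓑CT (β x) := by
    intro x t ht
    apply 𝓑CT.isBounded_subset (hβbdd (𝓑CR.isBounded_of_finite (Set.finite_singleton x)) ht)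
    rintro - ⟨y, hy, rfl⟩
    exact ⟨x, rfl, y, hy, rfl⟩
  have hγsingleR : ∀ x : CR, BoundedMap 𝓑CS 𝓑W (γ x) := by
    intro x t ht
    apply 𝓑W.isBounded_subset (hγ (𝓑CR.isBounded_of_finite (Set.finite_singleton x)) ht)
    rintro - ⟨y, hy, rfl⟩
    exact ⟨x, rfl, y, hy, rfl⟩
  -- agreement on the image of ιR
  have hagree1 : ∀ (r : R) (y : CS), h (β (ιR r) y) = γ (ιR r) y := by
    intro r y
    have hfbdd : BoundedMap 𝓛S 𝓑W (g0 ∘ₗ TensorProduct.mk V R S r) :=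
      BoundedMap.comp' hg0bdd (hmkbdd r)
    have huniq := hCS.2.2 W inferInstance inferInstance 𝓑W hWc _ hfbdd
    have h1 : (h ∘ₗ β (ιR r)).comp ιS = g0 ∘ₗ TensorProduct.mk V R S r := by
      apply LinearMap.ext
      intro s
      show h (β (ιR r) (ιS s)) = g0 (r ⊗ₜ[V] s)
      rw [hβcompat, show h (ιT (r ⊗ₜ[V] s)) = g0 (r ⊗ₜ[V] s) from
        LinearMap.congr_fun hhcomp (r ⊗ₜ[V] s)]
    have h2 : (γ (ιR r)).comp ιS = g0 ∘ₗ TensorProduct.mk V R S r := by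
      apply LinearMap.ext
      intro s
      show γ (ιR r) (ιS s) = g0 (r ⊗ₜ[V] s)
      rw [hg0tmul]
    have := ExistsUnique.unique huniq
      ⟨BoundedMap.comp' hhbdd (hβsingleR (ιR r)), h1⟩
      ⟨hγsingleR (ιR r), h2⟩
    exact LinearMap.congr_fun this y
  have hβsingleS : ∀ y : CS, BoundedMap 𝓑CR 𝓑CT (β.flip y) := by
    intro y s hs
    apply 𝓑CT.isBounded_subset (hβbdd hs (𝓑CS.isBounded_of_finite (Set.finite_singleton y)))
    rintro - ⟨x, hx, rfl⟩
    exact ⟨x, hx, y, rfl, rfl⟩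
  have hγsingleS : ∀ y : CS, BoundedMap 𝓑CR 𝓑W (γ.flip y) := by
    intro y s hs
    apply 𝓑W.isBounded_subset (hγ hs (𝓑CS.isBounded_of_finite (Set.finite_singleton y)))
    rintro - ⟨x, hx, rfl⟩
    exact ⟨x, hx, y, rfl, rfl⟩
  have hagree : ∀ (x : CR) (y : CS), h (β x y) = γ x y := by
    intro x y
    have hfy : BoundedMap 𝓛R 𝓑W ((γ.flip y).comp ιR) :=
      BoundedMap.comp' (hγsingleS y) hCR.2.1
    have huniq := hCR.2.2 W inferInstance inferInstance 𝓑W hWc _ hfy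
    have h1 : (h ∘ₗ β.flip y).comp ιR = (γ.flip y).comp ιR := by
      apply LinearMap.ext
      intro r
      show h (β (ιR r) y) = γ (ιR r) y
      exact hagree1 r y
    have := ExistsUnique.unique huniq
      ⟨BoundedMap.comp' hhbdd (hβsingleS y), h1⟩
      ⟨hγsingleS y, rfl⟩
    exact LinearMap.congr_fun this x
  refine ⟨h, ⟨hhbdd, hagree⟩, ?_⟩
  rintro h' ⟨h'bdd, h'prop⟩
  have hcomp' : h'.comp ιT = g0 := by
    apply TensorProduct.ext'
    intro r s
    show h' (ιT (r ⊗ₜ[V] s)) = g0 (r ⊗ₜ[V] s)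
    rw [← hβcompat, h'prop, hg0tmul]
  exact ExistsUnique.unique (hCT.2.2 W inferInstance inferInstance 𝓑W hWc g0 hg0bdd)
    ⟨h'bdd, hcomp'⟩ ⟨hhbdd, hhcomp⟩

end Part2

end Born
/-- **Statement 10.** Let `R` and `S` be bornological `V`-algebras.  The linear growth
bornology of the bornological tensor product `R ⊗ S` equals the tensor product of the
linear growth bornologies of `R` and `S`; consequently the linear growth completion of
`R ⊗ S` is naturally a complete bornological tensor product of the linear growth
completions of `R` and of `S`. -/
theorem linearGrowth_of_tensor
    {V : Type u} [CommRing V] [IsDomain V] [IsDiscreteValuationRing V]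
    (π : V) (hπ : Irreducible π) (hV : IsAdicComplete (Ideal.span {π}) V)
    (ε : ℝ) (hε0 : 0 < ε) (hε1 : ε < 1)
    {R : Type u} [Ring R] [Algebra V R] (𝓑R : ModBornology V R) (h𝓑R : IsAlgBorn 𝓑R)
    {S : Type u} [Ring S] [Algebra V S] (𝓑S : ModBornology V S) (h𝓑S : IsAlgBorn 𝓑S)
    (𝓛R : ModBornology V R) (h𝓛R : IsLinGrowthBorn π ε 𝓑R 𝓛R)
    (𝓛S : ModBornology V S) (h𝓛S : IsLinGrowthBorn π ε 𝓑S 𝓛S)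
    (𝓣 : ModBornology V (R ⊗[V] S)) (h𝓣 : IsTensorBorn 𝓑R 𝓑S 𝓣)
    (𝓛T : ModBornology V (R ⊗[V] S)) (h𝓛T : IsLinGrowthBorn π ε 𝓣 𝓛T)
    (𝓣' : ModBornology V (R ⊗[V] S)) (h𝓣' : IsTensorBorn 𝓛R 𝓛S 𝓣') :
    -- the linear growth bornology of `R ⊗ S` is the tensor product of the linear growth
    -- bornologies
    (∀ U : Set (R ⊗[V] S), 𝓛T.IsBounded U ↔ 𝓣'.IsBounded U)
    -- and consequently, for completions `CR`, `CS`, `CT` of `(R,𝓛R)`, `(S,𝓛S)` and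
    -- `(R ⊗ S, 𝓛T)`, the completion `CT` is a complete bornological tensor product of
    -- `CR` and `CS`
    ∧ (∀ (CR : Type u) (_ : AddCommGroup CR) (_ : Module V CR)
        (𝓑CR : ModBornology V CR) (ιR : R →ₗ[V] CR),
        IsCompletion π 𝓛R 𝓑CR ιR →
       ∀ (CS : Type u) (_ : AddCommGroup CS) (_ : Module V CS)
        (𝓑CS : ModBornology V CS) (ιS : S →ₗ[V] CS),
        IsCompletion π 𝓛S 𝓑CS ιS →
       ∀ (CT : Type u) (_ : AddCommGroup CT) (_ : Module V CT)
        (𝓑CT : ModBornology V CT) (ιT : R ⊗[V] S →ₗ[V] CT),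
        IsCompletion π 𝓛T 𝓑CT ιT →
        ∃ β : CR →ₗ[V] CS →ₗ[V] CT,
          BoundedBilin 𝓑CR 𝓑CS 𝓑CT β ∧
          (∀ (r : R) (s : S), β (ιR r) (ιS s) = ιT (r ⊗ₜ[V] s)) ∧
          ∀ (W : Type u) (_ : AddCommGroup W) (_ : Module V W) (𝓑W : ModBornology V W),
            BornComplete π 𝓑W → ∀ γ : CR →ₗ[V] CS →ₗ[V] W, BoundedBilin 𝓑CR 𝓑CS 𝓑W γ →
            ∃! h : CT →ₗ[V] W, BoundedMap 𝓑CT 𝓑W h ∧ ∀ (x : CR) (y : CS),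
              h (β x y) = γ x y) := by
  have hpart1 := part1_iff π hε0 hε1 𝓑R 𝓑S 𝓛R h𝓛R 𝓛S h𝓛S 𝓣 h𝓣 𝓛T h𝓛T 𝓣' h𝓣'
  refine ⟨hpart1, ?_⟩
  have hT : IsTensorBorn 𝓛R 𝓛S 𝓛T := fun U => (hpart1 U).trans (h𝓣' U)
  rintro CR gR mR 𝓑CR ιR hCR CS gS mS 𝓑CS ιS hCS CT gT mT 𝓑CT ιT hCT
  exact part2 π 𝓛R 𝓛S 𝓛T hT CR 𝓑CR ιR hCR CS 𝓑CS ιS hCS CT 𝓑CT ιT hCT
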